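/- Let R be a unitary ring and let σ = σ_1 σ_2 ⋯ σ_s ∈ Σ_n be a product of disjoint cycles, where σ_i is a cycle of length λ_i ≥ 1 with support X_i ⊆ [n] (the supports X_1,…,X_s partition [n]). Let f_i := Σ_{j ∈ X_i} e_{jj} ∈ S_n(σ,R). Then for each 1 ≤ i ≤ s, the corner ring f_i S_n(σ,R) f_i is isomorphic as a ring to the group ring R[C_{λ_i}] of the cyclic group of order λ_i over R. -/

import Mathlib

open Matrix

/-- The `σ`-invariant matrix ring `S_n(σ,R) = {a ∈ M_n(R) | a_{ij} = a_{σ(i)σ(j)}}`. -/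
def invariantSubring (R : Type*) [Ring R] {n : ℕ} (σ : Equiv.Perm (Fin n)) :
    Subring (Matrix (Fin n) (Fin n) R) where
  carrier := {a | ∀ i j, a i j = a (σ i) (σ j)}
  zero_mem' := fun i j => rfl
  one_mem' := fun i j => by
    simp [Matrix.one_apply, EmbeddingLike.apply_eq_iff_eq]
  add_mem' := fun {a b} ha hb i j => by
    simp only [Matrix.add_apply]; rw [ha i j, hb i j]
  neg_mem' := fun {a} ha i j => by
    simp only [Matrix.neg_apply]; rw [ha i j]
  mul_mem' := fun {a b} ha hb i j => by
    simp only [Matrix.mul_apply]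
    calc ∑ k, a i k * b k j
        = ∑ k, a (σ i) (σ k) * b (σ k) (σ j) :=
          Finset.sum_congr rfl fun k _ => by rw [← ha, ← hb]
      _ = ∑ k, a (σ i) k * b k (σ j) := Equiv.sum_comp σ fun k => a (σ i) k * b k (σ j)

lemma aux_mul_apply_univ {R G : Type*} [Ring R] [Group G] [Fintype G]
    (f g : MonoidAlgebra R G) (x : G) :
    (f * g).coeff x = ∑ a : G, f.coeff a * g.coeff (a⁻¹ * x) := by
  classical
  rw [MonoidAlgebra.coeff_mul_apply_left, Finsupp.sum_fintype]
  intro a; simp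

/-- Let `R` be a unitary ring and `σ = σ_1 ⋯ σ_s ∈ Σ_n` a product of disjoint cycles,
where `σ_i` is a cycle of length `λ_i ≥ 1` with support `X_i` (the supports partition
`[n]`; equivalently each `X i` is `σ`-invariant and `σ` acts transitively on it).  With
`f_i = Σ_{j ∈ X_i} e_{jj}`, the corner ring `f_i S_n(σ,R) f_i` is isomorphic as a ring to
the group ring `R[C_{λ_i}]`: there is an injective non-unital ring homomorphism from
`R[C_{λ_i}]` to `M_n(R)` with image `f_i S_n(σ,R) f_i = {b ∈ S_n(σ,R) | f_i b f_i = b}`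
sending `1` to `f_i`. -/
theorem corner_ring_iso_groupRing (R : Type*) [Ring R] {n s : ℕ}
    (σ : Equiv.Perm (Fin n)) (lam : Fin s → ℕ) (X : Fin s → Finset (Fin n))
    (hdisj : ∀ i j, i ≠ j → Disjoint (X i) (X j))
    (hcover : Finset.univ.biUnion X = Finset.univ)
    (hcard : ∀ i, (X i).card = lam i) (hpos : ∀ i, 1 ≤ lam i)
    (hinv : ∀ i, ∀ x ∈ X i, σ x ∈ X i)
    (htrans : ∀ i, ∀ x ∈ X i, ∀ y ∈ X i, ∃ k : ℕ, (σ ^ k) x = y)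
    (i : Fin s) :
    ∃ φ : MonoidAlgebra R (Multiplicative (ZMod (lam i))) →ₙ+* Matrix (Fin n) (Fin n) R,
      Function.Injective φ ∧
      φ 1 = Matrix.diagonal (fun j => if j ∈ X i then (1 : R) else 0) ∧
      Set.range φ = {b : Matrix (Fin n) (Fin n) R | b ∈ invariantSubring R σ ∧
        Matrix.diagonal (fun j => if j ∈ X i then (1 : R) else 0) * b *
          Matrix.diagonal (fun j => if j ∈ X i then (1 : R) else 0) = b} := by
  classical
  haveI : NeZero (lam i) := ⟨Nat.one_le_iff_ne_zero.mp (hpos i)⟩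
  obtain ⟨x0, hx0⟩ : (X i).Nonempty :=
    Finset.card_pos.mp (by rw [hcard]; exact hpos i)
  -- powers of σ preserve X i
  have hpow : ∀ (k : ℕ), ∀ x ∈ X i, (σ ^ k) x ∈ X i := by
    intro k
    induction k with
    | zero => intro x hx; simpa using hx
    | succ k ih =>
      intro x hx
      rw [pow_succ, Equiv.Perm.mul_apply]
      exact ih (σ x) (hinv i x hx)
  -- the minimal period of x0 equals lam i
  have hper : Function.IsPeriodicPt σ (orderOf σ) x0 := by
    show σ^[orderOf σ] x0 = x0
    rw [Equiv.Perm.iterate_eq_pow, pow_orderOf_eq_one]; rfl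
  set m := Function.minimalPeriod σ x0 with hm
  have hmpos : 0 < m := hper.minimalPeriod_pos (orderOf_pos σ)
  have key_mod : ∀ t : ℕ, (σ ^ t) x0 = (σ ^ (t % m)) x0 := by
    intro t
    rw [← Equiv.Perm.iterate_eq_pow, ← Equiv.Perm.iterate_eq_pow]
    exact (Function.iterate_mod_minimalPeriod_eq).symm
  have hinjm : Set.InjOn (fun k : ℕ => (σ ^ k) x0) (Set.Iio m) :=
    Function.iterate_injOn_Iio_minimalPeriod
  have himage : X i = (Finset.range m).image (fun k => (σ ^ k) x0) := by
    apply Finset.Subset.antisymm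
    · intro y hy
      obtain ⟨k, hk⟩ := htrans i x0 hx0 y hy
      exact Finset.mem_image.mpr ⟨k % m, Finset.mem_range.mpr (Nat.mod_lt _ hmpos),
        by rw [← key_mod]; exact hk⟩
    · intro y hy
      obtain ⟨k, _, hk⟩ := Finset.mem_image.mp hy
      rw [← hk]; exact hpow k x0 hx0
  have hmlam : m = lam i := by
    rw [← hcard i, himage, Finset.card_image_of_injOn, Finset.card_range]
    intro a ha b hb hab
    exact hinjm (Finset.mem_range.mp ha) (Finset.mem_range.mp hb) hab
  -- the parametrization ι : ZMod (lam i) → Fin n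
  set ι : ZMod (lam i) → Fin n := fun p => (σ ^ p.val) x0 with hι_def
  have hι_pow : ∀ t : ℕ, (σ ^ t) x0 = ι ((t : ZMod (lam i))) := by
    intro t
    show _ = (σ ^ (((t : ZMod (lam i))).val)) x0
    rw [ZMod.val_natCast, ← hmlam, ← key_mod]
  have hι_mem : ∀ p, ι p ∈ X i := fun p => hpow _ _ hx0
  have hι_inj : Function.Injective ι := by
    intro p q h
    apply ZMod.val_injective
    exact hinjm (by rw [hmlam]; exact ZMod.val_lt p) (by rw [hmlam]; exact ZMod.val_lt q) h
  have hι_surj : ∀ y ∈ X i, ∃ p, ι p = y := by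
    intro y hy
    obtain ⟨k, hk⟩ := htrans i x0 hx0 y hy
    exact ⟨(k : ZMod (lam i)), by rw [← hι_pow]; exact hk⟩
  have hι0 : ι 0 = x0 := by
    show (σ ^ (0 : ZMod (lam i)).val) x0 = x0
    rw [ZMod.val_zero, pow_zero]; rfl
  have hpow_ι : ∀ (t : ℕ) (p : ZMod (lam i)), (σ ^ t) (ι p) = ι (p + t) := by
    intro t p
    have : (σ ^ t) (ι p) = (σ ^ (t + p.val)) x0 := by
      rw [pow_add, Equiv.Perm.mul_apply]
    rw [this, hι_pow]
    congr 1
    push_cast [ZMod.natCast_val, ZMod.cast_id]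
    ring
  have hι_succ : ∀ p, σ (ι p) = ι (p + 1) := by
    intro p
    have := hpow_ι 1 p
    rw [pow_one] at this
    simpa using this
  -- the inverse index map
  set ind : Fin n → ZMod (lam i) := fun j =>
    if h : j ∈ X i then Classical.choose (hι_surj j h) else 0 with hind_def
  have hind : ∀ j, ∀ h : j ∈ X i, ι (ind j) = j := by
    intro j h
    simp only [hind_def, dif_pos h]
    exact Classical.choose_spec (hι_surj j h)
  have hind_ι : ∀ p, ind (ι p) = p := fun p => hι_inj (hind _ (hι_mem p))
  have hmem_iff : ∀ j, σ j ∈ X i ↔ j ∈ X i := by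
    intro j
    constructor
    · intro h
      obtain ⟨p, hp⟩ := hι_surj _ h
      have : j = ι (p - 1) := by
        apply σ.injective
        rw [hι_succ, sub_add_cancel, hp]
      rw [this]; exact hι_mem _
    · exact hinv i j
  have hind_σ : ∀ j ∈ X i, ind (σ j) = ind j + 1 := by
    intro j hj
    conv_lhs => rw [← hind j hj, hι_succ, hind_ι]
  have hind_x0 : ind x0 = 0 := by rw [← hι0, hind_ι]
  -- the entrywise description of the homomorphism
  set E : MonoidAlgebra R (Multiplicative (ZMod (lam i))) → Matrix (Fin n) (Fin n) R :=
    fun f => Matrix.of fun j k =>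
      if j ∈ X i ∧ k ∈ X i then f.coeff (Multiplicative.ofAdd (ind k - ind j)) else 0 with hE_def
  have hE_apply : ∀ f j k, E f j k =
      if j ∈ X i ∧ k ∈ X i then f.coeff (Multiplicative.ofAdd (ind k - ind j)) else 0 :=
    fun f j k => rfl
  have hE_mul : ∀ f g, E (f * g) = E f * E g := by
    intro f g
    ext j k
    rw [Matrix.mul_apply]
    rcases Decidable.em (j ∈ X i ∧ k ∈ X i) with h | h
    · rw [hE_apply, if_pos h]
      rw [aux_mul_apply_univ]
      have step1 : ∑ l : Fin n, E f j l * E g l k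
          = ∑ l ∈ X i, E f j l * E g l k := by
        refine (Finset.sum_subset (Finset.subset_univ (X i)) ?_).symm
        intro l _ hl
        rw [hE_apply f j l, if_neg (by tauto), zero_mul]
      have step2 : ∑ l ∈ X i, E f j l * E g l k
          = ∑ p : ZMod (lam i),
              f.coeff (Multiplicative.ofAdd (p - ind j)) * g.coeff (Multiplicative.ofAdd (ind k - p)) := by
        refine Finset.sum_nbij' (fun l => ind l) (fun p => ι p) ?_ ?_ ?_ ?_ ?_
        · intro l _; exact Finset.mem_univ _
        · intro p _; exact hι_mem p
        · intro l hl; exact hind l hl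
        · intro p _; exact hind_ι p
        · intro l hl
          rw [hE_apply, hE_apply, if_pos ⟨h.1, hl⟩, if_pos ⟨hl, h.2⟩]
      rw [step1, step2]
      refine (Fintype.sum_equiv
        ((Equiv.subRight (ind j)).trans Multiplicative.ofAdd) _ _ ?_).symm
      intro p
      simp only [Equiv.trans_apply, Equiv.subRight_apply]
      congr 1
      rw [← ofAdd_neg, ← ofAdd_add]
      congr 1
      ring
    · rw [hE_apply, if_neg h]
      rcases Decidable.not_and_iff_or_not.mp h with hj | hk
      · refine (Finset.sum_eq_zero fun l _ => ?_).symm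
        rw [hE_apply f j l, if_neg (by tauto), zero_mul]
      · refine (Finset.sum_eq_zero fun l _ => ?_).symm
        rw [hE_apply g l k, if_neg (by tauto), mul_zero]
  set φ : MonoidAlgebra R (Multiplicative (ZMod (lam i))) →ₙ+* Matrix (Fin n) (Fin n) R :=
    { toFun := E
      map_zero' := by
        show E 0 = 0
        ext j k
        rw [hE_apply]; simp
      map_add' := by
        intro f g
        show E (f + g) = E f + E g
        ext j k
        rw [Matrix.add_apply, hE_apply, hE_apply, hE_apply]
        split
        · exact Finsupp.add_apply _ _ _
        · simp
      map_mul' := hE_mul } with hφ_def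
  have hφ_apply : ∀ f, φ f = E f := fun f => rfl
  refine ⟨φ, ?_, ?_, ?_⟩
  · -- injectivity
    intro f g h
    ext a
    have hEq : E f = E g := h
    have h2 : E f x0 (ι (Multiplicative.toAdd a)) = E g x0 (ι (Multiplicative.toAdd a)) := by
      rw [hEq]
    rw [hE_apply, hE_apply, if_pos ⟨hx0, hι_mem _⟩,
      if_pos ⟨hx0, hι_mem _⟩, hind_ι, hind_x0, sub_zero] at h2
    simpa using h2
  · -- φ 1 = diagonal
    rw [hφ_apply]
    ext j k
    rw [hE_apply]
    rcases Decidable.em (j = k) with rfl | hjk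
    · rcases Decidable.em (j ∈ X i) with hj | hj
      · rw [if_pos ⟨hj, hj⟩, Matrix.diagonal_apply_eq, if_pos hj, sub_self]
        show (MonoidAlgebra.single (1 : Multiplicative (ZMod (lam i))) (1 : R)).coeff _ = 1
        rw [show Multiplicative.ofAdd (0 : ZMod (lam i)) = 1 from rfl]
        simp [MonoidAlgebra.single_apply]
      · rw [if_neg (by tauto), Matrix.diagonal_apply_eq, if_neg hj]
    · rw [Matrix.diagonal_apply_ne _ hjk]
      rcases Decidable.em (j ∈ X i ∧ k ∈ X i) with h | h
      · rw [if_pos h]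
        have hne : Multiplicative.ofAdd (ind k - ind j) ≠ 1 := by
          intro hc
          have : ind k - ind j = 0 := hc
          have : ind k = ind j := by linear_combination (norm := abel) this
          exact hjk ((hind j h.1).symm.trans (by rw [← this, hind k h.2]))
        show (MonoidAlgebra.single (1 : Multiplicative (ZMod (lam i))) (1 : R)).coeff _ = 0
        rw [MonoidAlgebra.single_apply, if_neg (fun hc => hne hc.symm)]
      · rw [if_neg h]
  · -- range description
    ext b
    simp only [Set.mem_range, Set.mem_setOf_eq]
    constructor
    · rintro ⟨f, rfl⟩
      rw [hφ_apply]
      constructor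
      · -- invariance
        intro j k
        rw [hE_apply, hE_apply]
        rcases Decidable.em (j ∈ X i ∧ k ∈ X i) with h | h
        · rw [if_pos h, if_pos ⟨(hmem_iff j).mpr h.1, (hmem_iff k).mpr h.2⟩,
            hind_σ j h.1, hind_σ k h.2]
          congr 2
          ring
        · rw [if_neg h, if_neg (by
            intro hc
            exact h ⟨(hmem_iff j).mp hc.1, (hmem_iff k).mp hc.2⟩)]
      · -- corner property
        ext j k
        rw [Matrix.mul_diagonal, Matrix.diagonal_mul]
        rcases Decidable.em (j ∈ X i ∧ k ∈ X i) with h | h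
        · rw [if_pos h.1, if_pos h.2, one_mul, mul_one]
        · rw [hE_apply, if_neg h, mul_zero, zero_mul]
    · rintro ⟨hb_inv, hb_corner⟩
      -- b vanishes outside X i × X i
      have hzero : ∀ j k, ¬(j ∈ X i ∧ k ∈ X i) → b j k = 0 := by
        intro j k h
        have h2 : (Matrix.diagonal (fun j => if j ∈ X i then (1 : R) else 0) * b *
            Matrix.diagonal (fun j => if j ∈ X i then (1 : R) else 0)) j k = b j k := by
          rw [hb_corner]
        rw [Matrix.mul_diagonal, Matrix.diagonal_mul] at h2
        rcases Decidable.not_and_iff_or_not.mp h with hj | hk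
        · rw [if_neg hj, zero_mul, zero_mul] at h2; exact h2.symm
        · rw [if_neg hk, mul_zero] at h2; exact h2.symm
      -- iterated invariance
      have hiter : ∀ (t : ℕ) (j k : Fin n), b j k = b ((σ ^ t) j) ((σ ^ t) k) := by
        intro t
        induction t with
        | zero => intro j k; simp
        | succ t ih =>
          intro j k
          rw [pow_succ', Equiv.Perm.mul_apply, Equiv.Perm.mul_apply]
          rw [ih j k]
          exact hb_inv _ _
      refine ⟨MonoidAlgebra.ofCoeff (Finsupp.equivFunOnFinite.symm
        (fun a : Multiplicative (ZMod (lam i)) => b x0 (ι (Multiplicative.toAdd a)))), ?_⟩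
      rw [hφ_apply]
      ext j k
      rw [hE_apply]
      rcases Decidable.em (j ∈ X i ∧ k ∈ X i) with h | h
      · rw [if_pos h]
        rw [MonoidAlgebra.coeff_ofCoeff, Finsupp.coe_equivFunOnFinite_symm]
        have e0 : (σ ^ (ind j).val) x0 = j := by
          rw [show (σ ^ (ind j).val) x0 = ι (ind j) from rfl, hind j h.1]
        have e1 : (σ ^ (ind j).val) (ι (Multiplicative.toAdd
            (Multiplicative.ofAdd (ind k - ind j)))) = k := by
          rw [hpow_ι]
          have : Multiplicative.toAdd (Multiplicative.ofAdd (ind k - ind j)) +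
              ((ind j).val : ZMod (lam i)) = ind k := by
            rw [toAdd_ofAdd]
            rw [ZMod.natCast_val, ZMod.cast_id]
            ring
          rw [this, hind k h.2]
        calc b x0 (ι (Multiplicative.toAdd (Multiplicative.ofAdd (ind k - ind j))))
            = b ((σ ^ (ind j).val) x0) ((σ ^ (ind j).val)
                (ι (Multiplicative.toAdd (Multiplicative.ofAdd (ind k - ind j))))) :=
              hiter _ _ _
          _ = b j k := by rw [e0, e1]
      · rw [if_neg h]
        exact (hzero j k h).symm
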